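/- Let a < b be positive integers and let G be a finite simple graph of order n ≥ 2(a+b)(a+b−1)/a such that |N_G(u) ∪ N_G(v)| ≥ bn/(a+b) for every pair of nonadjacent vertices u and v. Let S ⊆ V(G), T = {v ∈ V(G) − S : d_{G−S}(v) < b}, let h₁ = min{d_{G−S}(v) : v ∈ T} be attained at x₁ ∈ T, and suppose T − N_T[x₁] ≠ ∅ with h₂ = min{d_{G−S}(v) : v ∈ T − N_T[x₁]} attained at x₂. Then a|S| − b|T| + Σ_{x∈T} d_{G−S}(x) ≥ 0. -/

import Mathlib

open Finset

/-- The degree of `v` in the induced subgraph `G − S` (on `V(G) \ S`), i.e. the number of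
neighbors of `v` in `G` that lie outside `S`. -/
def dOut {V : Type*} [Fintype V] [DecidableEq V] (G : SimpleGraph V) [DecidableRel G.Adj]
    (S : Finset V) (v : V) : ℕ :=
  (G.neighborFinset v \ S).card

/-- `Tset G f S = {v ∈ V(G) − S : d_{G−S}(v) < f v}`. -/
def Tset {V : Type*} [Fintype V] [DecidableEq V] (G : SimpleGraph V) [DecidableRel G.Adj]
    (f : V → ℕ) (S : Finset V) : Finset V :=
  Sᶜ.filter fun v => dOut G S v < f v

/-- `h` is (the indicator function of) a fractional `(g,f)`-factor of `G`:
`0 ≤ h(e) ≤ 1` on every edge and `g x ≤ Σ_{e ∋ x} h e ≤ f x` for every vertex `x`. -/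
def IsFracFactor {V : Type*} [Fintype V] [DecidableEq V] (G : SimpleGraph V)
    [DecidableRel G.Adj] (g f : V → ℕ) (h : Sym2 V → ℝ) : Prop :=
  (∀ e ∈ G.edgeFinset, 0 ≤ h e ∧ h e ≤ 1) ∧
  ∀ x : V, (g x : ℝ) ≤ ∑ e ∈ G.incidenceFinset x, h e ∧
    ∑ e ∈ G.incidenceFinset x, h e ≤ (f x : ℝ)

/-- `G` has all fractional `(g,f)`-factors: for every `q : V → ℕ` with `g ≤ q ≤ f`
pointwise, `G` has a fractional `q`-factor (a fractional `(q,q)`-factor). -/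
def HasAllFracFactors {V : Type*} [Fintype V] [DecidableEq V] (G : SimpleGraph V)
    [DecidableRel G.Adj] (g f : V → ℕ) : Prop :=
  ∀ q : V → ℕ, (∀ v, g v ≤ q v) → (∀ v, q v ≤ f v) → ∃ h, IsFracFactor G q q h

/-- **Case 2 of the proof of Theorem 7.** Suppose `n ≥ 2(a+b)(a+b−1)/a` and
`|N_G(u) ∪ N_G(v)| ≥ bn/(a+b)` for all nonadjacent `u ≠ v`.  Let
`T = {v ∈ V(G)−S : d_{G−S}(v) < b}`, let `h₁ = min{d_{G−S}(v) : v ∈ T}` be attained at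
`x₁ ∈ T`, suppose `T − N_T[x₁] ≠ ∅`, and let `h₂ = min{d_{G−S}(v) : v ∈ T − N_T[x₁]}`
be attained at `x₂`.  Then `a|S| − b|T| + Σ_{x∈T} d_{G−S}(x) ≥ 0`. -/
theorem case_two_criterion {V : Type*} [Fintype V] [DecidableEq V]
    (G : SimpleGraph V) [DecidableRel G.Adj] (a b : ℕ) (ha : 0 < a) (hab : a < b)
    (hn : (Fintype.card V : ℝ) ≥ 2 * ((a : ℝ) + b) * ((a : ℝ) + b - 1) / a)
    (hnb : ∀ u v : V, u ≠ v → ¬ G.Adj u v →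
      (((G.neighborFinset u ∪ G.neighborFinset v).card : ℝ)) ≥
        (b : ℝ) * (Fintype.card V) / ((a : ℝ) + b))
    (S : Finset V) (x₁ x₂ : V) (h₁ h₂ : ℕ)
    (hx₁ : x₁ ∈ Tset G (fun _ => b) S)
    (hd₁ : dOut G S x₁ = h₁)
    (hmin₁ : ∀ v ∈ Tset G (fun _ => b) S, h₁ ≤ dOut G S v)
    (hx₂ : x₂ ∈ Tset G (fun _ => b) S \
      ((G.neighborFinset x₁ ∩ Tset G (fun _ => b) S) ∪ {x₁}))
    (hd₂ : dOut G S x₂ = h₂)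
    (hmin₂ : ∀ v ∈ Tset G (fun _ => b) S \
      ((G.neighborFinset x₁ ∩ Tset G (fun _ => b) S) ∪ {x₁}), h₂ ≤ dOut G S v) :
    0 ≤ (a : ℤ) * S.card - (b : ℤ) * (Tset G (fun _ => b) S).card +
        ∑ x ∈ Tset G (fun _ => b) S, (dOut G S x : ℤ) := by

  classical
  set T := Tset G (fun _ => b) S with hT
  set A : Finset V := (G.neighborFinset x₁ ∩ T) ∪ {x₁} with hA
  -- basic memberships
  have hx₁T : x₁ ∈ T := hx₁
  have hx₂T : x₂ ∈ T := (Finset.mem_sdiff.mp hx₂).1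
  have hx₂A : x₂ ∉ A := (Finset.mem_sdiff.mp hx₂).2
  have hAT : A ⊆ T := by
    apply Finset.union_subset Finset.inter_subset_right
    simpa using hx₁T
  have hTnotS : ∀ v ∈ T, v ∉ S := by
    intro v hv
    have := (Finset.mem_filter.mp hv).1
    simpa using this
  -- h₁ < b and h₂ < b
  have hh1b : h₁ < b := by
    have := (Finset.mem_filter.mp hx₁T).2
    simpa [hd₁] using this
  have hh2b : h₂ < b := by
    have := (Finset.mem_filter.mp hx₂T).2
    simpa [hd₂] using this
  have h12 : h₁ ≤ h₂ := by
    have := hmin₁ x₂ hx₂T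
    rwa [hd₂] at this
  -- x₁ ≠ x₂ and nonadjacent
  have hne : x₁ ≠ x₂ := by
    intro h; exact hx₂A (by simp [hA, ← h])
  have hnadj : ¬ G.Adj x₁ x₂ := by
    intro h
    exact hx₂A (Finset.mem_union_left _ (Finset.mem_inter.mpr
      ⟨(SimpleGraph.mem_neighborFinset G x₁ x₂).mpr h, hx₂T⟩))
  -- |N(x₁) ∪ N(x₂)| ≤ h₁ + h₂ + |S|
  have hcover : (G.neighborFinset x₁ ∪ G.neighborFinset x₂).card ≤ h₁ + h₂ + S.card := by
    have hsub : G.neighborFinset x₁ ∪ G.neighborFinset x₂ ⊆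
        (G.neighborFinset x₁ \ S) ∪ ((G.neighborFinset x₂ \ S) ∪ S) := by
      intro v hv
      rcases Finset.mem_union.mp hv with h | h
      · by_cases hvS : v ∈ S
        · exact Finset.mem_union_right _ (Finset.mem_union_right _ hvS)
        · exact Finset.mem_union_left _ (Finset.mem_sdiff.mpr ⟨h, hvS⟩)
      · by_cases hvS : v ∈ S
        · exact Finset.mem_union_right _ (Finset.mem_union_right _ hvS)
        · exact Finset.mem_union_right _ (Finset.mem_union_left _ (Finset.mem_sdiff.mpr ⟨h, hvS⟩))
    calc (G.neighborFinset x₁ ∪ G.neighborFinset x₂).card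
        ≤ ((G.neighborFinset x₁ \ S) ∪ ((G.neighborFinset x₂ \ S) ∪ S)).card :=
          Finset.card_le_card hsub
      _ ≤ (G.neighborFinset x₁ \ S).card + ((G.neighborFinset x₂ \ S) ∪ S).card :=
          Finset.card_union_le _ _
      _ ≤ (G.neighborFinset x₁ \ S).card + ((G.neighborFinset x₂ \ S).card + S.card) := by
          exact Nat.add_le_add_left (Finset.card_union_le _ _) _
      _ = h₁ + h₂ + S.card := by
          rw [show (G.neighborFinset x₁ \ S).card = h₁ from hd₁,
              show (G.neighborFinset x₂ \ S).card = h₂ from hd₂]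
          ring
  -- |A| ≤ h₁ + 1
  have hmle : A.card ≤ h₁ + 1 := by
    have hsub : G.neighborFinset x₁ ∩ T ⊆ G.neighborFinset x₁ \ S := by
      intro v hv
      rcases Finset.mem_inter.mp hv with ⟨h1, h2⟩
      exact Finset.mem_sdiff.mpr ⟨h1, hTnotS v h2⟩
    calc A.card ≤ (G.neighborFinset x₁ ∩ T).card + ({x₁} : Finset V).card :=
          Finset.card_union_le _ _
      _ ≤ (G.neighborFinset x₁ \ S).card + 1 := by
          simpa using Nat.add_le_add_right (Finset.card_le_card hsub) 1
      _ = h₁ + 1 := by rw [show (G.neighborFinset x₁ \ S).card = h₁ from hd₁]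
  -- |S| + |T| ≤ n
  have hstn : S.card + T.card ≤ Fintype.card V := by
    have hdisj : Disjoint S T := by
      rw [Finset.disjoint_right]
      intro v hv; exact hTnotS v hv
    calc S.card + T.card = (S ∪ T).card := (Finset.card_union_of_disjoint hdisj).symm
      _ ≤ Fintype.card V := Finset.card_le_univ _
  -- sum lower bound
  have hsum : A.card * h₁ + (T \ A).card * h₂ ≤ ∑ x ∈ T, dOut G S x := by
    have s1 : A.card * h₁ ≤ ∑ x ∈ A, dOut G S x := by
      simpa [mul_comm] using Finset.card_nsmul_le_sum A (dOut G S) h₁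
        (fun v hv => hmin₁ v (hAT hv))
    have s2 : (T \ A).card * h₂ ≤ ∑ x ∈ T \ A, dOut G S x := by
      simpa [mul_comm] using Finset.card_nsmul_le_sum (T \ A) (dOut G S) h₂
        (fun v hv => hmin₂ v hv)
    have := Finset.sum_sdiff (f := dOut G S) hAT
    omega
  -- pass to the reals
  have habpos : (0:ℝ) < (a:ℝ) + b := by positivity
  have hapos : (0:ℝ) < (a:ℝ) := by exact_mod_cast ha
  have hCard : (T \ A).card + A.card = T.card := Finset.card_sdiff_add_card_eq_card hAT
  -- real variables
  have hnbig : 2 * ((a:ℝ) + b) * ((a:ℝ) + b - 1) ≤ (a:ℝ) * (Fintype.card V : ℝ) := by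
    rw [ge_iff_le, div_le_iff₀ hapos] at hn
    linarith
  have hNB : (b:ℝ) * (Fintype.card V : ℝ) ≤ ((h₁:ℝ) + h₂ + S.card) * ((a:ℝ) + b) := by
    have := hnb x₁ x₂ hne hnadj
    rw [ge_iff_le, div_le_iff₀ habpos] at this
    have hc : ((G.neighborFinset x₁ ∪ G.neighborFinset x₂).card : ℝ) ≤
        (h₁:ℝ) + h₂ + S.card := by exact_mod_cast hcover
    have := mul_le_mul_of_nonneg_right hc habpos.le
    linarith
  -- name real variables
  have hstnR : (S.card : ℝ) + T.card ≤ (Fintype.card V : ℝ) := by exact_mod_cast hstn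
  have hmleR : (A.card : ℝ) ≤ (h₁:ℝ) + 1 := by exact_mod_cast hmle
  have hsumR : (A.card : ℝ) * h₁ + ((T \ A).card : ℝ) * h₂ ≤
      ∑ x ∈ T, (dOut G S x : ℝ) := by
    push_cast
    exact_mod_cast hsum
  have hCardR : ((T \ A).card : ℝ) + A.card = T.card := by exact_mod_cast hCard
  have h12R : (h₁:ℝ) ≤ h₂ := by exact_mod_cast h12
  have hh2bR : (h₂:ℝ) + 1 ≤ b := by exact_mod_cast hh2b
  have haR : (1:ℝ) ≤ a := by exact_mod_cast ha
  have habR : (a:ℝ) + 1 ≤ b := by exact_mod_cast hab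
  have h1nn : (0:ℝ) ≤ (h₁:ℝ) := Nat.cast_nonneg _
  have h2nn : (0:ℝ) ≤ (h₂:ℝ) := Nat.cast_nonneg _
  -- the nonnegative products
  have p1 : (0:ℝ) ≤ ((a:ℝ)+b) * ((∑ x ∈ T, (dOut G S x : ℝ)) -
      ((A.card : ℝ) * h₁ + ((T \ A).card : ℝ) * h₂)) :=
    mul_nonneg habpos.le (by linarith)
  have p2 : (0:ℝ) ≤ ((a:ℝ)+b) * (((b:ℝ) - h₂) *
      ((Fintype.card V : ℝ) - S.card - (((T \ A).card : ℝ) + A.card))) :=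
    mul_nonneg habpos.le (mul_nonneg (by linarith) (by linarith))
  have p3 : (0:ℝ) ≤ ((a:ℝ)+b) * (((h₂:ℝ) - h₁) * ((h₁:ℝ) + 1 - A.card)) :=
    mul_nonneg habpos.le (mul_nonneg (by linarith) (by linarith))
  have p4 : (0:ℝ) ≤ ((a:ℝ) + b - h₂) * (((h₁:ℝ) + h₂ + S.card) * ((a:ℝ)+b) - (b:ℝ) * (Fintype.card V : ℝ)) :=
    mul_nonneg (by linarith) (by linarith)
  have p5 : (0:ℝ) ≤ (h₂:ℝ) * ((a:ℝ) * (Fintype.card V : ℝ) - 2 * ((a:ℝ)+b) * ((a:ℝ)+b-1)) :=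
    mul_nonneg h2nn (by linarith)
  have p6 : (0:ℝ) ≤ ((a:ℝ)+b) * (((a:ℝ) + b - h₂ - 2) * ((h₂:ℝ) - h₁)) :=
    mul_nonneg habpos.le (mul_nonneg (by linarith) (by linarith))
  have sq1 : (0:ℝ) ≤ (h₁:ℝ) * ((h₁:ℝ) - 1) := by
    rcases Nat.eq_zero_or_pos h₁ with h | h
    · simp [h]
    · have h' : (1:ℝ) ≤ (h₁:ℝ) := by exact_mod_cast h
      exact mul_nonneg (by linarith) (by linarith)
  have sq2 : (0:ℝ) ≤ (h₂:ℝ) * ((h₂:ℝ) - 1) := by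
    rcases Nat.eq_zero_or_pos h₂ with h | h
    · simp [h]
    · have h' : (1:ℝ) ≤ (h₂:ℝ) := by exact_mod_cast h
      exact mul_nonneg (by linarith) (by linarith)
  have p7 : (0:ℝ) ≤ ((a:ℝ)+b) * ((h₂:ℝ) * ((h₂:ℝ) - 1)) := mul_nonneg habpos.le sq2
  have p8 : (0:ℝ) ≤ ((a:ℝ)+b) * ((h₂:ℝ) * ((h₂:ℝ) - h₁)) :=
    mul_nonneg habpos.le (mul_nonneg h2nn (by linarith))
  have p9 : (0:ℝ) ≤ ((a:ℝ)+b) * ((h₁:ℝ) * ((h₁:ℝ) - 1)) := mul_nonneg habpos.le sq1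
  -- the real-valued goal
  have key : (0:ℝ) ≤ ((a:ℝ)+b) *
      ((a:ℝ) * S.card - (b:ℝ) * (((T \ A).card : ℝ) + A.card) +
        ∑ x ∈ T, (dOut G S x : ℝ)) := by
    have hsumP := add_nonneg (add_nonneg (add_nonneg (add_nonneg (add_nonneg (add_nonneg
      (add_nonneg (add_nonneg p1 p2) p3) p4) p5) p6) p7) p8) p9
    calc (0:ℝ) ≤
        ((a:ℝ)+b) * ((∑ x ∈ T, (dOut G S x : ℝ)) -
          ((A.card : ℝ) * h₁ + ((T \ A).card : ℝ) * h₂))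
        + ((a:ℝ)+b) * (((b:ℝ) - h₂) *
            ((Fintype.card V : ℝ) - S.card - (((T \ A).card : ℝ) + A.card)))
        + ((a:ℝ)+b) * (((h₂:ℝ) - h₁) * ((h₁:ℝ) + 1 - A.card))
        + ((a:ℝ) + b - h₂) * (((h₁:ℝ) + h₂ + S.card) * ((a:ℝ)+b)
            - (b:ℝ) * (Fintype.card V : ℝ))
        + (h₂:ℝ) * ((a:ℝ) * (Fintype.card V : ℝ) - 2 * ((a:ℝ)+b) * ((a:ℝ)+b-1))
        + ((a:ℝ)+b) * (((a:ℝ) + b - h₂ - 2) * ((h₂:ℝ) - h₁))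
        + ((a:ℝ)+b) * ((h₂:ℝ) * ((h₂:ℝ) - 1))
        + ((a:ℝ)+b) * ((h₂:ℝ) * ((h₂:ℝ) - h₁))
        + ((a:ℝ)+b) * ((h₁:ℝ) * ((h₁:ℝ) - 1)) := hsumP
      _ = ((a:ℝ)+b) * ((a:ℝ) * S.card - (b:ℝ) * (((T \ A).card : ℝ) + A.card) +
            ∑ x ∈ T, (dOut G S x : ℝ)) := by ring
  have goalR : (0:ℝ) ≤ (a:ℝ) * S.card - (b:ℝ) * T.card + ∑ x ∈ T, (dOut G S x : ℝ) := by
    have h0 : ((a:ℝ)+b) * 0 ≤ ((a:ℝ)+b) *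
        ((a:ℝ) * S.card - (b:ℝ) * (((T \ A).card : ℝ) + A.card) +
          ∑ x ∈ T, (dOut G S x : ℝ)) := by
      simpa using key
    have h1 := (mul_le_mul_iff_right₀ habpos).mp h0
    rwa [hCardR] at h1
  have hfin : ((0:ℤ):ℝ) ≤ (((a : ℤ) * S.card - (b : ℤ) * T.card +
      ∑ x ∈ T, (dOut G S x : ℤ) : ℤ) : ℝ) := by
    push_cast
    linarith [goalR]
  exact_mod_cast hfin
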